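/- (Closed Completeness) Every closed and valid formula is deducible: if s is a formula with no free variables and every standard interpretation satisfies s, then ∅ ⊢ s. -/

import Mathlib

namespace PTT


/-- Simple types over a single base type `B`. -/
inductive Ty : Type
  | base : Ty
  | arrow : Ty → Ty → Ty
deriving DecidableEq

/-- Names: the constants `⊥` and `→`, and variables (an index together with a type). -/
inductive Name : Type
  | bot : Name
  | imp : Name
  | var : ℕ → Ty → Name
deriving DecidableEq

/-- The type of a name. -/
def Name.ty : Name → Ty
  | .bot => .base
  | .imp => .arrow .base (.arrow .base .base)
  | .var _ σ => σ

/-- Terms: names, abstraction over a variable, application. -/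
inductive Tm : Type
  | name : Name → Tm
  | lam : ℕ → Ty → Tm → Tm
  | app : Tm → Tm → Tm
deriving DecidableEq

/-- The term `⊥`. -/
def botTm : Tm := .name .bot

/-- The variable `(n, σ)` as a term. -/
def vr (n : ℕ) (σ : Ty) : Tm := .name (.var n σ)

/-- Implication `s → t`. -/
def impTm (s t : Tm) : Tm := .app (.app (.name .imp) s) t

/-- `⊤ := ⊥ → ⊥`. -/
def topTm : Tm := impTm botTm botTm

/-- `¬ s := s → ⊥`. -/
def negTm (s : Tm) : Tm := impTm s botTm

/-- `s ∨ t := (s → t) → t`. -/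
def orTm (s t : Tm) : Tm := impTm (impTm s t) t

/-- `s ∧ t := ¬(¬s ∨ ¬t)`. -/
def andTm (s t : Tm) : Tm := negTm (orTm (negTm s) (negTm t))

/-- `s ≡ t := (s → t) ∧ (t → s)`. -/
def equivTm (s t : Tm) : Tm := andTm (impTm s t) (impTm t s)

/-- The typing relation. -/
inductive HasTy : Tm → Ty → Prop
  | name (x : Name) : HasTy (.name x) x.ty
  | lam {n σ s τ} : HasTy s τ → HasTy (.lam n σ s) (.arrow σ τ)
  | app {s t σ τ} : HasTy s (.arrow σ τ) → HasTy t σ → HasTy (.app s t) τ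

/-- Free variables of a term. -/
def fv : Tm → Finset (ℕ × Ty)
  | .name (.var n σ) => {(n, σ)}
  | .name _ => ∅
  | .lam n σ s => (fv s).erase (n, σ)
  | .app s t => fv s ∪ fv t

/-- A term is closed if it has no free variables. -/
def Closed (s : Tm) : Prop := fv s = ∅

/-- Capture-free parallel substitution (bound variables are renamed). -/
def substAux (ρ : ℕ × Ty → Tm) : Tm → Tm
  | .name (.var n σ) => ρ (n, σ)
  | .name x => .name x
  | .app s t => .app (substAux ρ s) (substAux ρ t)
  | .lam n σ s =>
      let used : Finset ℕ :=
        ((fv s).erase (n, σ)).biUnion (fun p => (fv (ρ p)).image Prod.fst)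
      let m : ℕ := used.sup id + 1
      .lam m σ (substAux (Function.update ρ (n, σ) (vr m σ)) s)

/-- Capture-free substitution `s[(n,σ) := t]`. -/
def subst (s : Tm) (n : ℕ) (σ : Ty) (t : Tm) : Tm :=
  substAux (Function.update (fun p => vr p.1 p.2) (n, σ) t) s

/-- Contexts: terms with exactly one hole (possibly under binders). -/
inductive Ctx : Type
  | hole : Ctx
  | lam : ℕ → Ty → Ctx → Ctx
  | appL : Ctx → Tm → Ctx
  | appR : Tm → Ctx → Ctx

/-- Filling the hole of a context with a term (capturing is allowed). -/
def Ctx.fill : Ctx → Tm → Tm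
  | .hole, s => s
  | .lam n σ C, s => .lam n σ (C.fill s)
  | .appL C t, s => .app (C.fill s) t
  | .appR t C, s => .app t (C.fill s)

/-- `C` captures the variable `p` if the hole of `C` lies below a binder for `p`. -/
def Ctx.captures : Ctx → ℕ × Ty → Prop
  | .hole, _ => False
  | .lam n σ C, p => p = (n, σ) ∨ C.captures p
  | .appL C _, p => C.captures p
  | .appR _ C, p => C.captures p

/-- `C` is admissible for `A` if it captures no variable free in `A`. -/
def Ctx.Admissible (C : Ctx) (A : Finset Tm) : Prop :=
  ∀ p ∈ A.biUnion fv, ¬ C.captures p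

/-- `s` is a subterm of `t`. -/
def Subterm (s t : Tm) : Prop := ∃ C : Ctx, C.fill s = t

/-- β-redexes. -/
def IsBetaRedex : Tm → Prop
  | .app (.lam _ _ _) _ => True
  | _ => False

/-- A term is β-normal if none of its subterms is a β-redex. -/
def BetaNormal (t : Tm) : Prop := ∀ s, Subterm s t → ¬ IsBetaRedex s

/-- Lambda equivalence: the least equivalence on well-typed terms containing
α-, β-, η-conversion and closed under arbitrary contexts. -/
inductive LamEq : Tm → Tm → Prop
  | refl {s σ} : HasTy s σ → LamEq s s
  | symm {s t} : LamEq s t → LamEq t s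
  | trans {s t u} : LamEq s t → LamEq t u → LamEq s u
  | alpha {n m σ s τ} : HasTy (.lam n σ s) τ → (m, σ) ∉ fv s →
      LamEq (.lam n σ s) (.lam m σ (subst s n σ (vr m σ)))
  | beta {n σ s t τ} : HasTy (.app (.lam n σ s) t) τ →
      LamEq (.app (.lam n σ s) t) (subst s n σ t)
  | eta {n σ s τ} : HasTy (.lam n σ (.app s (vr n σ))) τ → (n, σ) ∉ fv s →
      LamEq (.lam n σ (.app s (vr n σ))) s
  | ctx {s t σ} (C : Ctx) : LamEq s t → HasTy (C.fill s) σ → LamEq (C.fill s) (C.fill t)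

/-- The standard set-theoretic interpretation of types: `B` is interpreted as the
two truth values (`Bool`), functional types as full function spaces. -/
def Ty.sem : Ty → Type
  | .base => Bool
  | .arrow σ τ => σ.sem → τ.sem

def Ty.semDefault : (σ : Ty) → σ.sem
  | .base => false
  | .arrow _ τ => fun _ => τ.semDefault

instance (σ : Ty) : Inhabited σ.sem := ⟨σ.semDefault⟩

noncomputable instance Ty.semFintype : (σ : Ty) → Fintype σ.sem
  | .base => inferInstanceAs (Fintype Bool)
  | .arrow σ τ =>
      letI := Ty.semFintype σ
      letI := Ty.semFintype τ
      letI := Classical.decEq σ.sem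
      inferInstanceAs (Fintype (σ.sem → τ.sem))

def Ty.semCast {σ τ : Ty} (h : σ = τ) (v : σ.sem) : τ.sem := h ▸ v

/-- An interpretation assigns to every variable a value of the corresponding type
(the constants `⊥` and `→` have their values fixed). -/
def Interp : Type := ℕ → (σ : Ty) → σ.sem

def Interp.update (I : Interp) (n : ℕ) (σ : Ty) (v : σ.sem) : Interp :=
  fun m τ => if h : m = n ∧ τ = σ then Ty.semCast h.2.symm v else I m τ

/-- Type inference. -/
def typeOf : Tm → Option Ty
  | .name x => some x.ty
  | .lam _ σ s => (typeOf s).map (Ty.arrow σ)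
  | .app s t =>
      match typeOf s, typeOf t with
      | some (.arrow σ τ), some σ' => if σ = σ' then some τ else none
      | _, _ => none

/-- The canonical extension `Î` of an interpretation to all terms: `eval I s σ`
is the value of `s` at type `σ` (on well-typed terms this is the usual
denotation; junk default values are used at type mismatches). -/
def eval (I : Interp) : Tm → (σ : Ty) → σ.sem
  | .name (.var n τ), σ => if h : τ = σ then Ty.semCast h (I n τ) else default
  | .name .bot, σ =>
      match σ with
      | .base => false
      | _ => default
  | .name .imp, σ =>
      match σ with
      | .arrow .base (.arrow .base .base) => fun a b => !a || b
      | _ => default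
  | .app s t, σ =>
      match typeOf t with
      | some τ => eval I s (.arrow τ σ) (eval I t τ)
      | none => default
  | .lam n τ s, σ =>
      match σ with
      | .base => default
      | .arrow σ₁ σ₂ =>
          if h : σ₁ = τ then
            fun a => eval (I.update n τ (Ty.semCast h a)) s σ₂
          else default

/-- `I` satisfies the formula `s` if `Î s = 1`. -/
def Satisfies (I : Interp) (s : Tm) : Prop := eval I s .base = true

/-- A formula is valid if every interpretation satisfies it. -/
def ValidFml (s : Tm) : Prop := ∀ I : Interp, Satisfies I s

/-- A sequent `A ⇒ s` is valid if every interpretation satisfying `A` satisfies `s`. -/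
def ValidSeq (A : Finset Tm) (s : Tm) : Prop :=
  ∀ I : Interp, (∀ t ∈ A, Satisfies I t) → Satisfies I s

/-- Finite disjunction (the empty disjunction is `⊥`). -/
def orList : List Tm → Tm
  | [] => botTm
  | [s] => s
  | s :: l => orTm s (orList l)

/-- Finite conjunction (the empty conjunction is `⊤`). -/
def andList : List Tm → Tm
  | [] => topTm
  | [s] => s
  | s :: l => andTm s (andList l)

/-- The argument types of a type (every type has the form `σ₁…σₙB`). -/
def Ty.args : Ty → List Ty
  | .base => []
  | .arrow σ τ => σ :: τ.args

/-- Tuples of values along a list of types. -/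
def Tup : List Ty → Type
  | [] => PUnit
  | σ :: l => σ.sem × Tup l

noncomputable instance TupFintype : (l : List Ty) → Fintype (Tup l)
  | [] => inferInstanceAs (Fintype PUnit)
  | σ :: l =>
      letI := TupFintype l
      inferInstanceAs (Fintype (σ.sem × Tup l))

/-- Applying a function value to a tuple of arguments (the result type is `B`). -/
def Ty.applyTup : (σ : Ty) → σ.sem → Tup σ.args → Bool
  | .base, a, _ => a
  | .arrow _ τ, f, p => τ.applyTup (f p.1) p.2

/-- Quote/identity data for each type in a list: a quote function and the term `≐`. -/
def ArgData : List Ty → Type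
  | [] => PUnit
  | σ :: l => ((σ.sem → Tm) × Tm) × ArgData l

/-- The conjunction list `x_k ≐_{σ_k} (↓_{σ_k} b_k), …` for a tuple `b`. -/
def eqConj : (l : List Ty) → ArgData l → ℕ → Tup l → List Tm
  | [], _, _, _ => []
  | σ :: l, (d, ds), k, (b, bs) =>
      (.app (.app d.2 (vr k σ)) (d.1 b)) :: eqConj l ds (k + 1) bs

/-- `λ x_k : σ_k. …` binding one variable for each type in the list. -/
def mkLams : (l : List Ty) → ℕ → Tm → Tm
  | [], _, body => body
  | σ :: l, k, body => .lam k σ (mkLams l (k + 1) body)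

/-- The body of the quote term
`↓_{σ₁…σₙB} a := λx₁…xₙ. ⋁_{b₁…bₙ, a b₁…bₙ = 1} ⋀_j x_j ≐_{σ_j} (↓_{σ_j} b_j)`. -/
noncomputable def quoteBodyAux (σ : Ty) (ad : ArgData σ.args) (a : σ.sem) : Tm :=
  mkLams σ.args 0 (orList
    ((((Finset.univ : Finset (Tup σ.args)).toList.filter
        (fun b => σ.applyTup a b))).map
      (fun b => andList (eqConj σ.args ad 0 b))))

/-- `∀σ := λf. ⋀_{a ∈ Bσ} f (↓σ a)`, given the quote function for `σ`. -/
noncomputable def allTmAux (σ : Ty) (q : σ.sem → Tm) : Tm :=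
  .lam 0 (.arrow σ .base)
    (andList (((Finset.univ : Finset σ.sem).toList).map
      (fun a => .app (vr 0 (.arrow σ .base)) (q a))))

mutual
  /-- The quote function `↓σ` together with the identity term `≐σ`. -/
  noncomputable def quoteEq : (σ : Ty) → ((σ.sem → Tm) × Tm)
    | .base =>
        (fun a => quoteBodyAux .base PUnit.unit a,
         .lam 0 .base (.lam 1 .base (equivTm (vr 0 .base) (vr 1 .base))))
    | .arrow σ τ =>
        (fun a => quoteBodyAux (.arrow σ τ) ((quoteEq σ, argData τ) : ArgData (σ :: τ.args)) a,
         .lam 0 (.arrow σ τ) (.lam 1 (.arrow σ τ)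
           (.app (allTmAux σ (quoteEq σ).1)
             (.lam 2 σ
               (.app (.app (quoteEq τ).2
                  (.app (vr 0 (.arrow σ τ)) (vr 2 σ)))
                (.app (vr 1 (.arrow σ τ)) (vr 2 σ)))))))
  /-- Quote/identity data for all argument types of a type. -/
  noncomputable def argData : (σ : Ty) → ArgData σ.args
    | .base => PUnit.unit
    | .arrow σ τ => ((quoteEq σ, argData τ) : ArgData (σ :: τ.args))
end

/-- The quote function `↓σ : Bσ → Λ`. -/
noncomputable def quote (σ : Ty) (a : σ.sem) : Tm := (quoteEq σ).1 a

/-- The term `≐σ : σσB` denoting the identity predicate on `Bσ`. -/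
noncomputable def eqTm (σ : Ty) : Tm := (quoteEq σ).2

/-- The term `∀σ : (σB)B`. -/
noncomputable def allTm (σ : Ty) : Tm := allTmAux σ (quote σ)


/-- Propositional formulas: `s ::= x | ⊥ | s → s` with `x` a variable of type `B`. -/
inductive Propositional : Tm → Prop
  | var (n : ℕ) : Propositional (vr n .base)
  | bot : Propositional botTm
  | imp {s t} : Propositional s → Propositional t → Propositional (impTm s t)

/-- A type-respecting substitution of terms for variables. -/
def IsSubstitution (ρ : ℕ × Ty → Tm) : Prop := ∀ n σ, HasTy (ρ (n, σ)) σ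

/-- A formula is tautologous if it is a substitution instance of a tautology
(a valid propositional formula). -/
def Tautologous (s : Tm) : Prop :=
  ∃ t ρ, Propositional t ∧ ValidFml t ∧ IsSubstitution ρ ∧ s = substAux ρ t

/-- The proof system: Triv, Weak, Ded, MP, DN, Lam and Boolean replacement (BR).
Sequents consist of a finite set of formulas and a formula. -/
inductive Ded : Finset Tm → Tm → Prop
  | triv {A s} : (∀ t ∈ A, HasTy t .base) → HasTy s .base → Ded (insert s A) s
  | weak {A s t} : HasTy s .base → Ded A t → Ded (insert s A) t
  | ded {A s t} : Ded (insert s A) t → Ded A (impTm s t)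
  | mp {A s t} : Ded A (impTm s t) → Ded A s → Ded A t
  | dn {A s} : Ded A (negTm (negTm s)) → Ded A s
  | lam {A s t} : Ded A s → LamEq s t → HasTy t .base → Ded A t
  | br {A s t} (C : Ctx) : C.Admissible A → Ded A (equivTm s t) →
      Ded A (C.fill s) → HasTy (C.fill t) .base → Ded A (C.fill t)


/-! ### Auxiliary development for closed completeness -/

section AuxCC

/-- The fresh variable index chosen by `substAux` at a binder. -/
def frsh (ρ : ℕ × Ty → Tm) (n : ℕ) (σ : Ty) (s : Tm) : ℕ :=
  (((fv s).erase (n, σ)).biUnion (fun p => (fv (ρ p)).image Prod.fst)).sup id + 1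

lemma substAux_lam (ρ : ℕ × Ty → Tm) (n : ℕ) (σ : Ty) (s : Tm) :
    substAux ρ (.lam n σ s) =
      .lam (frsh ρ n σ s) σ
        (substAux (Function.update ρ (n, σ) (vr (frsh ρ n σ s) σ)) s) := rfl

@[simp] lemma fv_var (n : ℕ) (σ : Ty) : fv (.name (.var n σ)) = {(n, σ)} := rfl
@[simp] lemma fv_vr (n : ℕ) (σ : Ty) : fv (vr n σ) = {(n, σ)} := rfl
@[simp] lemma fv_bot : fv (.name .bot) = ∅ := rfl
@[simp] lemma fv_botTm : fv botTm = ∅ := rfl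
@[simp] lemma fv_imp : fv (.name .imp) = ∅ := rfl
@[simp] lemma fv_app (s t : Tm) : fv (.app s t) = fv s ∪ fv t := rfl
@[simp] lemma fv_lam (n : ℕ) (σ : Ty) (s : Tm) :
    fv (.lam n σ s) = (fv s).erase (n, σ) := rfl

lemma semCast_refl {σ : Ty} (h : σ = σ) (v : σ.sem) : Ty.semCast h v = v := by
  rw [Subsingleton.elim h rfl]; rfl

lemma frsh_gt {ρ : ℕ × Ty → Tm} {n : ℕ} {σ : Ty} {s : Tm} {p q : ℕ × Ty}
    (hp : p ∈ (fv s).erase (n, σ)) (hq : q ∈ fv (ρ p)) : q.1 < frsh ρ n σ s := by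
  have : q.1 ∈ ((fv s).erase (n, σ)).biUnion (fun p => (fv (ρ p)).image Prod.fst) :=
    Finset.mem_biUnion.2 ⟨p, hp, Finset.mem_image.2 ⟨q, hq, rfl⟩⟩
  have := Finset.le_sup (f := id) this
  simpa [frsh, Nat.lt_succ_iff] using this

lemma fv_substAux (s : Tm) : ∀ ρ : ℕ × Ty → Tm,
    fv (substAux ρ s) ⊆ (fv s).biUnion (fun p => fv (ρ p)) := by
  induction s with
  | name x =>
    intro ρ
    cases x with
    | var n σ =>
      intro q hq
      exact Finset.mem_biUnion.2 ⟨(n, σ), by simp, by simpa [substAux] using hq⟩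
    | bot => simp [substAux]
    | imp => simp [substAux]
  | app s t ihs iht =>
    intro ρ
    simp only [substAux, fv_app]
    intro q hq
    rcases Finset.mem_union.1 hq with h | h
    · rcases Finset.mem_biUnion.1 (ihs ρ h) with ⟨p, hp, hq'⟩
      exact Finset.mem_biUnion.2 ⟨p, Finset.mem_union_left _ hp, hq'⟩
    · rcases Finset.mem_biUnion.1 (iht ρ h) with ⟨p, hp, hq'⟩
      exact Finset.mem_biUnion.2 ⟨p, Finset.mem_union_right _ hp, hq'⟩
  | lam n σ b ih =>
    intro ρ
    rw [substAux_lam]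
    intro q hq
    rw [fv_lam] at hq
    have hq1 := Finset.ne_of_mem_erase hq
    have hq2 := Finset.mem_of_mem_erase hq
    rcases Finset.mem_biUnion.1 (ih _ hq2) with ⟨p, hp, hq'⟩
    by_cases hpn : p = (n, σ)
    · subst hpn
      rw [Function.update_self] at hq'
      rw [fv_vr, Finset.mem_singleton] at hq'
      exact absurd hq' hq1
    · rw [Function.update_of_ne hpn] at hq'
      exact Finset.mem_biUnion.2 ⟨p, by
        rw [fv_lam]; exact Finset.mem_erase.2 ⟨hpn, hp⟩, hq'⟩

lemma hasTy_substAux : ∀ {s : Tm} {σ : Ty}, HasTy s σ → ∀ {ρ : ℕ × Ty → Tm},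
    (∀ p ∈ fv s, HasTy (ρ p) p.2) → HasTy (substAux ρ s) σ := by
  intro s σ h
  induction h with
  | name x =>
    intro ρ hρ
    cases x with
    | var n σ => exact hρ (n, σ) (by simp [fv, vr])
    | bot => exact HasTy.name .bot
    | imp => exact HasTy.name .imp
  | app hs ht ihs iht =>
    intro ρ hρ
    exact HasTy.app (ihs fun p hp => hρ p (by simp [hp]))
      (iht fun p hp => hρ p (by simp [hp]))
  | @lam n σ s τ hb ih =>
    intro ρ hρ
    rw [substAux_lam]
    refine HasTy.lam (ih fun p hp => ?_)
    by_cases hpn : p = (n, σ)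
    · subst hpn; rw [Function.update_self]; exact HasTy.name (.var _ _)
    · rw [Function.update_of_ne hpn]
      exact hρ p (by rw [fv_lam]; exact Finset.mem_erase.2 ⟨hpn, hp⟩)

/-- Size of a term. -/
def tmSize : Tm → ℕ
  | .name _ => 1
  | .lam _ _ s => tmSize s + 1
  | .app s t => tmSize s + tmSize t + 1

lemma tmSize_substAux (s : Tm) : ∀ ρ : ℕ × Ty → Tm,
    (∀ p, ∃ k τ, ρ p = vr k τ) → tmSize (substAux ρ s) = tmSize s := by
  induction s with
  | name x =>
    intro ρ hρ
    cases x with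
    | var n σ => rcases hρ (n, σ) with ⟨k, τ, hk⟩; simp [substAux, hk, vr, tmSize]
    | bot => rfl
    | imp => rfl
  | app s t ihs iht => intro ρ hρ; simp [substAux, tmSize, ihs ρ hρ, iht ρ hρ]
  | lam n σ b ih =>
    intro ρ hρ
    rw [substAux_lam]
    simp only [tmSize]
    rw [ih _ fun p => ?_]
    by_cases hpn : p = (n, σ)
    · subst hpn; rw [Function.update_self]; exact ⟨_, _, rfl⟩
    · rw [Function.update_of_ne hpn]; exact hρ p

lemma typeOf_complete : ∀ {s : Tm} {σ : Ty}, HasTy s σ → typeOf s = some σ := by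
  intro s σ h
  induction h with
  | name x => rfl
  | app hs ht ihs iht => simp [typeOf, ihs, iht]
  | lam hb ih => simp [typeOf, ih]

/-! ### De Bruijn bridge -/

/-- De Bruijn skeletons. -/
inductive D : Type
  | bv : ℕ → D
  | fvar : ℕ × Ty → D
  | cb : D
  | ci : D
  | lam : Ty → D → D
  | app : D → D → D
deriving DecidableEq

/-- Index of the first occurrence in an environment. -/
def idx : List (ℕ × Ty) → ℕ × Ty → Option ℕ
  | [], _ => none
  | q :: E, p => if p = q then some 0 else (idx E p).map (· + 1)

/-- De Bruijn translation. -/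
def db : List (ℕ × Ty) → Tm → D
  | E, .name (.var n σ) =>
      match idx E (n, σ) with
      | some i => .bv i
      | none => .fvar (n, σ)
  | _, .name .bot => .cb
  | _, .name .imp => .ci
  | E, .lam n σ b => .lam σ (db ((n, σ) :: E) b)
  | E, .app s t => .app (db E s) (db E t)

/-- Free variables of a skeleton. -/
def Dfv : D → Finset (ℕ × Ty)
  | .bv _ => ∅
  | .fvar p => {p}
  | .cb => ∅
  | .ci => ∅
  | .lam _ b => Dfv b
  | .app s t => Dfv s ∪ Dfv t

/-- Naive (capture-free) substitution on skeletons. -/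
def dsub (f : ℕ × Ty → D) : D → D
  | .bv k => .bv k
  | .fvar p => f p
  | .cb => .cb
  | .ci => .ci
  | .lam σ b => .lam σ (dsub f b)
  | .app s t => .app (dsub f s) (dsub f t)

/-- Replacing the bound variable `c` by the free variable `q`. -/
def dinst (q : ℕ × Ty) : ℕ → D → D
  | c, .bv k => if k = c then .fvar q else .bv k
  | _, .fvar p => .fvar p
  | _, .cb => .cb
  | _, .ci => .ci
  | c, .lam σ b => .lam σ (dinst q (c + 1) b)
  | c, .app s t => .app (dinst q c s) (dinst q c t)

lemma idx_lt {E : List (ℕ × Ty)} {p : ℕ × Ty} {i : ℕ} (h : idx E p = some i) :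
    i < E.length := by
  induction E generalizing i with
  | nil => simp [idx] at h
  | cons q E ih =>
    by_cases hpq : p = q
    · simp [idx, hpq] at h; simp only [List.length_cons]; omega
    · simp [idx, hpq, Option.map_eq_some_iff] at h
      rcases h with ⟨j, hj, rfl⟩
      have := ih hj
      simp; omega

lemma idx_none_iff {E : List (ℕ × Ty)} {p : ℕ × Ty} : idx E p = none ↔ p ∉ E := by
  induction E with
  | nil => simp [idx]
  | cons q E ih =>
    by_cases hpq : p = q
    · simp [idx, hpq]
    · simp [idx, hpq, ih]

lemma idx_get {E : List (ℕ × Ty)} {p : ℕ × Ty} {i : ℕ} (h : idx E p = some i) :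
    E[i]? = some p := by
  induction E generalizing i with
  | nil => simp [idx] at h
  | cons q E ih =>
    by_cases hpq : p = q
    · simp [idx, hpq] at h; subst hpq; simp [← h]
    · simp [idx, hpq, Option.map_eq_some_iff] at h
      rcases h with ⟨j, hj, rfl⟩
      simpa using ih hj

lemma idx_append (E : List (ℕ × Ty)) (x p : ℕ × Ty) :
    idx (E ++ [x]) p = match idx E p with
      | some i => some i
      | none => if p = x then some E.length else none := by
  induction E with
  | nil => by_cases h : p = x <;> simp [idx, h]
  | cons q E ih =>
    cases h : idx E p with
    | some i => by_cases hpq : p = q <;> simp [idx, hpq, ih, h]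
    | none =>
      by_cases hpq : p = q
      · simp [idx, hpq, ih, h]
      · by_cases hx : p = x
        · subst hx; simp [idx, hpq, ih, h]
        · simp [idx, hpq, ih, h, hx]

lemma db_ext : ∀ (t : Tm) (E E' : List (ℕ × Ty)),
    (∀ p ∈ fv t, idx E p = idx E' p) → db E t = db E' t := by
  intro t
  induction t with
  | name x =>
    intro E E' h
    cases x with
    | var n σ => simp [db, h (n, σ) (by simp)]
    | bot => rfl
    | imp => rfl
  | app s t ihs iht =>
    intro E E' h
    simp only [db]
    rw [ihs E E' fun p hp => h p (by simp [hp]), iht E E' fun p hp => h p (by simp [hp])]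
  | lam n σ b ih =>
    intro E E' h
    simp only [db]
    rw [ih ((n, σ) :: E) ((n, σ) :: E') fun p hp => ?_]
    by_cases hpn : p = (n, σ)
    · simp [idx, hpn]
    · simp only [idx, if_neg hpn]
      rw [h p (Finset.mem_erase.2 ⟨hpn, hp⟩)]

lemma db_fv : ∀ (t : Tm) (E : List (ℕ × Ty)) (p : ℕ × Ty),
    p ∈ Dfv (db E t) → p ∈ fv t ∧ idx E p = none := by
  intro t
  induction t with
  | name x =>
    intro E p hp
    cases x with
    | var n σ =>
      simp only [db] at hp
      cases h : idx E (n, σ) with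
      | some i => rw [h] at hp; simp [Dfv] at hp
      | none => rw [h] at hp; simp [Dfv] at hp; subst hp; exact ⟨by simp, h⟩
    | bot => simp [db, Dfv] at hp
    | imp => simp [db, Dfv] at hp
  | app s t ihs iht =>
    intro E p hp
    simp only [db, Dfv, Finset.mem_union] at hp
    rcases hp with h | h
    · exact ⟨by simp [(ihs E p h).1], (ihs E p h).2⟩
    · exact ⟨by simp [(iht E p h).1], (iht E p h).2⟩
  | lam n σ b ih =>
    intro E p hp
    simp only [db, Dfv] at hp
    obtain ⟨h1, h2⟩ := ih _ p hp
    simp only [idx] at h2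
    by_cases hpn : p = (n, σ)
    · simp [hpn] at h2
    · simp only [if_neg hpn, Option.map_eq_none_iff] at h2
      exact ⟨Finset.mem_erase.2 ⟨hpn, h1⟩, h2⟩

lemma dsub_congr {f g : ℕ × Ty → D} : ∀ d : D, (∀ p ∈ Dfv d, f p = g p) →
    dsub f d = dsub g d := by
  intro d
  induction d with
  | bv k => intro; rfl
  | fvar p => intro h; exact h p (by simp [Dfv])
  | cb => intro; rfl
  | ci => intro; rfl
  | lam σ b ih => intro h; simp only [dsub]; rw [ih fun p hp => h p hp]
  | app s t ihs iht =>
    intro h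
    simp only [dsub]
    rw [ihs fun p hp => h p (by simp [Dfv, hp]),
        iht fun p hp => h p (by simp [Dfv, hp])]

lemma dsub_id : ∀ d : D, dsub (fun p => .fvar p) d = d := by
  intro d
  induction d with
  | bv k => rfl
  | fvar p => rfl
  | cb => rfl
  | ci => rfl
  | lam σ b ih => simp only [dsub]; rw [ih]
  | app s t ihs iht => simp only [dsub]; rw [ihs, iht]

lemma dsub_nofv {f : ℕ × Ty → D} {d : D} (h : Dfv d = ∅) : dsub f d = d := by
  rw [dsub_congr d (g := fun p => .fvar p) (by simp [h]), dsub_id]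

lemma dsub_dsub (f g : ℕ × Ty → D) : ∀ d : D,
    dsub g (dsub f d) = dsub (fun p => dsub g (f p)) d := by
  intro d
  induction d with
  | bv k => rfl
  | fvar p => rfl
  | cb => rfl
  | ci => rfl
  | lam σ b ih => simp only [dsub]; rw [ih]
  | app s t ihs iht => simp only [dsub]; rw [ihs, iht]

lemma dinst_ge (q : ℕ × Ty) : ∀ (t : Tm) (E : List (ℕ × Ty)) (c : ℕ),
    E.length ≤ c → dinst q c (db E t) = db E t := by
  intro t
  induction t with
  | name x =>
    intro E c hc
    cases x with
    | var n σ =>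
      simp only [db]
      cases h : idx E (n, σ) with
      | some i =>
        have := idx_lt h
        simp [dinst]; omega
      | none => rfl
    | bot => rfl
    | imp => rfl
  | app s t ihs iht => intro E c hc; simp only [db, dinst]; rw [ihs E c hc, iht E c hc]
  | lam n σ b ih =>
    intro E c hc
    simp only [db, dinst]
    rw [ih ((n, σ) :: E) (c + 1) (by simpa using hc)]

/-- Master lemma: de Bruijn image of a substitution. -/
lemma db_substAux : ∀ (s : Tm) (ρ : ℕ × Ty → Tm) (E E' : List (ℕ × Ty)),
    (∀ p ∈ fv s, ∀ i, idx E p = some i →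
      ∃ q : ℕ × Ty, ρ p = vr q.1 q.2 ∧ idx E' q = some i) →
    (∀ p ∈ fv s, idx E p = none → ∀ q ∈ fv (ρ p), idx E' q = none) →
    db E' (substAux ρ s) = dsub (fun p => db [] (ρ p)) (db E s) := by
  intro s
  induction s with
  | name x =>
    intro ρ E E' h2 h3
    cases x with
    | var n σ =>
      have hmem : (n, σ) ∈ fv (Tm.name (Name.var n σ)) := by simp
      show db E' (ρ (n, σ)) = dsub _ (db E (.name (.var n σ)))
      cases h : idx E (n, σ) with
      | some i =>
        obtain ⟨q, hq1, hq2⟩ := h2 (n, σ) hmem i h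
        rw [hq1]
        simp only [db, h, dsub, vr, Prod.mk.eta, hq2]
      | none =>
        simp only [db, h, dsub]
        exact db_ext _ _ _ fun q hq => by
          rw [h3 (n, σ) hmem h q hq, idx]
    | bot => rfl
    | imp => rfl
  | app u v ihu ihv =>
    intro ρ E E' h2 h3
    simp only [substAux, db, dsub]
    rw [ihu ρ E E' (fun p hp => h2 p (by simp [hp])) (fun p hp => h3 p (by simp [hp])),
        ihv ρ E E' (fun p hp => h2 p (by simp [hp])) (fun p hp => h3 p (by simp [hp]))]
  | lam n σ b ih =>
    intro ρ E E' h2 h3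
    rw [substAux_lam]
    simp only [db, dsub]
    have hfr : ∀ p ∈ (fv b).erase (n, σ), ∀ q ∈ fv (ρ p), q ≠ (frsh ρ n σ b, σ) := by
      intro p hp q hq hqe
      have := frsh_gt hp hq
      rw [hqe] at this
      exact absurd this (lt_irrefl _)
    have key : db ((frsh ρ n σ b, σ) :: E')
          (substAux (Function.update ρ (n, σ) (vr (frsh ρ n σ b) σ)) b)
        = dsub (fun p => db [] (Function.update ρ (n, σ) (vr (frsh ρ n σ b) σ) p))
            (db ((n, σ) :: E) b) := by
      apply ih
      · intro p hp i hi
        by_cases hpn : p = (n, σ)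
        · subst hpn
          simp only [idx, if_pos rfl, Option.some.injEq] at hi
          refine ⟨(frsh ρ n σ b, σ), by simp [Function.update_self], ?_⟩
          simp [idx, ← hi]
        · simp only [idx, if_neg hpn, Option.map_eq_some_iff] at hi
          obtain ⟨j, hj, rfl⟩ := hi
          obtain ⟨q, hq1, hq2⟩ :=
            h2 p (by rw [fv_lam]; exact Finset.mem_erase.2 ⟨hpn, hp⟩) j hj
          refine ⟨q, by rw [Function.update_of_ne hpn]; exact hq1, ?_⟩
          have hqne : q ≠ (frsh ρ n σ b, σ) :=
            hfr p (Finset.mem_erase.2 ⟨hpn, hp⟩) q (by rw [hq1]; simp)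
          simp [idx, hqne, hq2]
      · intro p hp hnone q hq
        by_cases hpn : p = (n, σ)
        · subst hpn; simp [idx] at hnone
        · simp only [idx, if_neg hpn, Option.map_eq_none_iff] at hnone
          rw [Function.update_of_ne hpn] at hq
          have hqne : q ≠ (frsh ρ n σ b, σ) :=
            hfr p (Finset.mem_erase.2 ⟨hpn, hp⟩) q hq
          simp only [idx, if_neg hqne, Option.map_eq_none_iff]
          exact h3 p (by rw [fv_lam]; exact Finset.mem_erase.2 ⟨hpn, hp⟩) hnone q hq
    rw [key]
    refine congrArg _ (dsub_congr _ fun p hp => ?_)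
    have := (db_fv b ((n, σ) :: E) p hp).2
    have hpn : p ≠ (n, σ) := by
      intro h; subst h; simp [idx] at this
    rw [Function.update_of_ne hpn]

/-- Opening a binder: `dsub` of a variable renaming versus `dinst`. -/
lemma dsub_open : ∀ (b : Tm) (E : List (ℕ × Ty)) (n : ℕ) (σ : Ty) (q : ℕ × Ty),
    (n, σ) ∉ E →
    dsub (Function.update (fun p => D.fvar p) (n, σ) (D.fvar q)) (db E b)
      = dinst q E.length (db (E ++ [(n, σ)]) b) := by
  intro b
  induction b with
  | name x =>
    intro E n σ q hE
    cases x with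
    | var k τ =>
      simp only [db, idx_append]
      cases h : idx E (k, τ) with
      | some i =>
        have := idx_lt h
        simp only [dsub, dinst]
        rw [if_neg (by omega)]
      | none =>
        by_cases hk : (k, τ) = (n, σ)
        · rw [if_pos hk]
          simp only [dsub, dinst, if_pos rfl]
          rw [hk, Function.update_self]
          simp
        · rw [if_neg hk]
          simp [dsub, dinst, Function.update_of_ne hk]
    | bot => rfl
    | imp => rfl
  | app u v ihu ihv =>
    intro E n σ q hE
    simp only [db, dsub, dinst]
    rw [ihu E n σ q hE, ihv E n σ q hE]
  | lam k τ c ih =>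
    intro E n σ q hE
    simp only [db, dsub, dinst, List.cons_append]
    by_cases hk : (k, τ) = (n, σ)
    · rw [hk]
      have e1 : db ((n, σ) :: (E ++ [(n, σ)])) c = db ((n, σ) :: E) c := by
        apply db_ext
        intro p _
        by_cases hpn : p = (n, σ)
        · simp [idx, hpn]
        · simp only [idx, if_neg hpn, idx_append]
          cases h : idx E p with
          | some i => rfl
          | none => simp [hpn]
      rw [e1]
      have e2 : dinst q (E.length + 1) (db ((n, σ) :: E) c) = db ((n, σ) :: E) c :=
        dinst_ge q c ((n, σ) :: E) (E.length + 1) (by simp)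
      rw [e2]
      refine congrArg _ ?_
      have e3 : dsub (Function.update (fun p => D.fvar p) (n, σ) (D.fvar q))
          (db ((n, σ) :: E) c) = dsub (fun p => D.fvar p) (db ((n, σ) :: E) c) := by
        apply dsub_congr
        intro p hp
        have := (db_fv c ((n, σ) :: E) p hp).2
        have hpn : p ≠ (n, σ) := by
          intro h; subst h; simp [idx] at this
        rw [Function.update_of_ne hpn]
      rw [e3, dsub_id]
    · have : (n, σ) ∉ (k, τ) :: E := by
        intro h
        rcases List.mem_cons.1 h with h | h
        · exact hk h.symm
        · exact hE h
      have h5 := ih ((k, τ) :: E) n σ q this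
      rw [List.cons_append] at h5
      simp only [List.length_cons] at h5
      rw [h5]

lemma tmSize_pos (s : Tm) : 1 ≤ tmSize s := by
  cases s <;> simp [tmSize] <;> omega

lemma db_ty : ∀ (s t : Tm) (σ τ : Ty) (E E' : List (ℕ × Ty)),
    HasTy s σ → HasTy t τ → db E s = db E' t →
    E.map Prod.snd = E'.map Prod.snd → σ = τ := by
  intro s
  induction s with
  | name x =>
    intro t σ τ E E' hs ht hdb hE
    cases t with
    | name y =>
      cases x with
      | var n σ₁ =>
        cases y with
        | var k τ₁ =>
          cases hs; cases ht
          cases h1 : idx E (n, σ₁) with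
          | some i =>
            cases h2 : idx E' (k, τ₁) with
            | some j =>
              simp only [db, h1, h2, D.bv.injEq] at hdb
              subst hdb
              have g1 := idx_get h1
              have g2 := idx_get h2
              have : (E.map Prod.snd)[i]? = (E'.map Prod.snd)[i]? := by rw [hE]
              rw [List.getElem?_map, List.getElem?_map, g1, g2] at this
              simpa [Name.ty] using this
            | none => simp [db, h1, h2] at hdb
          | none =>
            cases h2 : idx E' (k, τ₁) with
            | some j => simp [db, h1, h2] at hdb
            | none =>
              simp only [db, h1, h2, D.fvar.injEq, Prod.mk.injEq] at hdb
              exact hdb.2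
        | bot => cases h1 : idx E (n, σ₁) <;> simp [db, h1] at hdb
        | imp => cases h1 : idx E (n, σ₁) <;> simp [db, h1] at hdb
      | bot =>
        cases y with
        | var k τ₁ => cases h2 : idx E' (k, τ₁) <;> simp [db, h2] at hdb
        | bot => cases hs; cases ht; rfl
        | imp => simp [db] at hdb
      | imp =>
        cases y with
        | var k τ₁ => cases h2 : idx E' (k, τ₁) <;> simp [db, h2] at hdb
        | bot => simp [db] at hdb
        | imp => cases hs; cases ht; rfl
    | lam k τ₁ b => cases x with
      | var n σ₁ => cases h1 : idx E (n, σ₁) <;> simp [db, h1] at hdb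
      | bot => simp [db] at hdb
      | imp => simp [db] at hdb
    | app u v => cases x with
      | var n σ₁ => cases h1 : idx E (n, σ₁) <;> simp [db, h1] at hdb
      | bot => simp [db] at hdb
      | imp => simp [db] at hdb
  | lam n σ₁ b ih =>
    intro t σ τ E E' hs ht hdb hE
    cases t with
    | name y => cases y with
      | var k τ₁ => cases h2 : idx E' (k, τ₁) <;> simp [db, h2] at hdb
      | bot => simp [db] at hdb
      | imp => simp [db] at hdb
    | app u v => simp [db] at hdb
    | lam k τ₁ b' =>
      simp only [db, D.lam.injEq] at hdb
      obtain ⟨rfl, hdb⟩ := hdb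
      cases hs with | lam hb =>
      cases ht with | lam hb' =>
      have := ih b' _ _ ((n, σ₁) :: E) ((k, σ₁) :: E') hb hb' hdb (by simp [hE])
      rw [this]
  | app u v ihu ihv =>
    intro t σ τ E E' hs ht hdb hE
    cases t with
    | name y => cases y with
      | var k τ₁ => cases h2 : idx E' (k, τ₁) <;> simp [db, h2] at hdb
      | bot => simp [db] at hdb
      | imp => simp [db] at hdb
    | lam k τ₁ b' => simp [db] at hdb
    | app u' v' =>
      simp only [db, D.app.injEq] at hdb
      cases hs with | app hu hv =>
      cases ht with | app hu' hv' =>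
      have harr := ihu u' _ _ E E' hu hu' hdb.1 hE
      exact (Ty.arrow.inj harr).2

lemma db_name_var (E : List (ℕ × Ty)) (n : ℕ) (σ : Ty) (h : idx E (n, σ) = none) :
    db E (.name (.var n σ)) = .fvar (n, σ) := by simp [db, h]

/-- De Bruijn equality implies lambda equivalence. -/
lemma lamEq_of_db : ∀ (N : ℕ) (s t : Tm) (σ : Ty), tmSize s ≤ N →
    HasTy s σ → HasTy t σ → db [] s = db [] t → LamEq s t := by
  intro N
  induction N with
  | zero => intro s t σ hN; have := tmSize_pos s; omega
  | succ N ih =>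
    intro s t σ hN hs ht hdb
    cases s with
    | name x =>
      cases t with
      | name y =>
        cases x with
        | var n σ₁ =>
          cases y with
          | var k τ₁ =>
            simp only [db, idx, D.fvar.injEq, Prod.mk.injEq] at hdb
            obtain ⟨rfl, rfl⟩ := hdb
            exact LamEq.refl hs
          | bot => simp [db, idx] at hdb
          | imp => simp [db, idx] at hdb
        | bot =>
          cases y with
          | var k τ₁ => simp [db, idx] at hdb
          | bot => exact LamEq.refl hs
          | imp => simp [db] at hdb
        | imp =>
          cases y with
          | var k τ₁ => simp [db, idx] at hdb
          | bot => simp [db] at hdb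
          | imp => exact LamEq.refl hs
      | lam k τ₁ b' => cases x <;> simp [db, idx] at hdb
      | app u' v' => cases x <;> simp [db, idx] at hdb
    | app u v =>
      cases t with
      | name y => cases y <;> simp [db, idx] at hdb
      | lam k τ₁ b' => simp [db] at hdb
      | app u' v' =>
        simp only [db, D.app.injEq] at hdb
        cases hs with | app hu hv =>
        cases ht with | app hu' hv' =>
        have hty := db_ty u u' _ _ [] [] hu hu' hdb.1 rfl
        injection hty with e1 e2
        subst e1
        simp only [tmSize] at hN
        have l1 : LamEq u u' := ih u u' _ (by omega) hu hu' hdb.1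
        have l2 : LamEq v v' := ih v v' _ (by omega) hv hv' hdb.2
        have s1 : LamEq (.app u v) (.app u' v) :=
          LamEq.ctx (σ := σ) (.appL .hole v) l1 (HasTy.app hu hv)
        have s2 : LamEq (.app u' v) (.app u' v') :=
          LamEq.ctx (σ := σ) (.appR u' .hole) l2 (HasTy.app hu' hv)
        exact LamEq.trans s1 s2
    | lam n σ₁ b =>
      cases t with
      | name y => cases y <;> simp [db, idx] at hdb
      | app u' v' => simp [db] at hdb
      | lam k τ₁ b' =>
        simp only [db, D.lam.injEq] at hdb
        obtain ⟨rfl, hdb⟩ := hdb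
        cases hs with | @lam _ _ _ β hb =>
        cases ht with | lam hb' =>
        -- choose a fresh variable
        set m : ℕ := ((fv b ∪ fv b').sup Prod.fst) + 1 with hmdef
        have hfb : (m, σ₁) ∉ fv b := by
          intro hmem
          have : m ≤ (fv b ∪ fv b').sup Prod.fst :=
            Finset.le_sup (f := Prod.fst) (Finset.mem_union_left _ hmem)
          omega
        have hfb' : (m, σ₁) ∉ fv b' := by
          intro hmem
          have : m ≤ (fv b ∪ fv b').sup Prod.fst :=
            Finset.le_sup (f := Prod.fst) (Finset.mem_union_right _ hmem)
          omega
        have hsub : ∀ (c : Tm) (j : ℕ), db [] (subst c j σ₁ (vr m σ₁))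
            = dinst (m, σ₁) 0 (db [(j, σ₁)] c) := by
          intro c j
          have e1 := db_substAux c
            (Function.update (fun p => vr p.1 p.2) (j, σ₁) (vr m σ₁)) [] []
            (by intro p _ i hi; simp [idx] at hi)
            (by intro p _ _ q _; rfl)
          have e2 : (fun p => db []
              (Function.update (fun p => vr p.1 p.2) (j, σ₁) (vr m σ₁) p))
              = Function.update (fun p => D.fvar p) (j, σ₁) (D.fvar (m, σ₁)) := by
            funext p
            by_cases hp : p = (j, σ₁)
            · subst hp; rw [Function.update_self, Function.update_self]; rfl
            · rw [Function.update_of_ne hp, Function.update_of_ne hp]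
              simp [vr, db, idx]
          rw [subst, e1, e2]
          have := dsub_open c [] j σ₁ (m, σ₁) (by simp)
          simpa using this
        have hbodyTy : HasTy (subst b n σ₁ (vr m σ₁)) β := by
          apply hasTy_substAux hb
          intro p _
          by_cases hp : p = (n, σ₁)
          · subst hp; rw [Function.update_self]; exact HasTy.name _
          · rw [Function.update_of_ne hp]; exact HasTy.name _
        have hbodyTy' : HasTy (subst b' k σ₁ (vr m σ₁)) β := by
          apply hasTy_substAux hb'
          intro p _
          by_cases hp : p = (k, σ₁)
          · subst hp; rw [Function.update_self]; exact HasTy.name _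
          · rw [Function.update_of_ne hp]; exact HasTy.name _
        have hdbeq : db [] (subst b n σ₁ (vr m σ₁)) = db [] (subst b' k σ₁ (vr m σ₁)) := by
          rw [hsub b n, hsub b' k, hdb]
        have hsize : tmSize (subst b n σ₁ (vr m σ₁)) ≤ N := by
          have : tmSize (subst b n σ₁ (vr m σ₁)) = tmSize b := by
            apply tmSize_substAux
            intro p
            by_cases hp : p = (n, σ₁)
            · subst hp; rw [Function.update_self]; exact ⟨_, _, rfl⟩
            · rw [Function.update_of_ne hp]; exact ⟨_, _, rfl⟩
          simp only [tmSize] at hN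
          omega
        have lbody : LamEq (subst b n σ₁ (vr m σ₁)) (subst b' k σ₁ (vr m σ₁)) :=
          ih _ _ β hsize hbodyTy hbodyTy' hdbeq
        have a1 : LamEq (.lam n σ₁ b) (.lam m σ₁ (subst b n σ₁ (vr m σ₁))) :=
          LamEq.alpha (HasTy.lam hb) hfb
        have a2 : LamEq (.lam k σ₁ b') (.lam m σ₁ (subst b' k σ₁ (vr m σ₁))) :=
          LamEq.alpha (HasTy.lam hb') hfb'
        have c1 : LamEq (.lam m σ₁ (subst b n σ₁ (vr m σ₁)))
            (.lam m σ₁ (subst b' k σ₁ (vr m σ₁))) :=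
          LamEq.ctx (σ := .arrow σ₁ β) (.lam m σ₁ .hole) lbody (HasTy.lam hbodyTy)
        exact LamEq.trans a1 (LamEq.trans c1 (LamEq.symm a2))

/-! ### Deduction toolkit -/

lemma hasTy_botTm : HasTy botTm .base := HasTy.name .bot

lemma hasTy_impTm {v w : Tm} (hv : HasTy v .base) (hw : HasTy w .base) :
    HasTy (impTm v w) .base :=
  HasTy.app (HasTy.app (HasTy.name .imp) hv) hw

lemma hasTy_negTm {v : Tm} (hv : HasTy v .base) : HasTy (negTm v) .base :=
  hasTy_impTm hv hasTy_botTm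

lemma ded_neg_bot : Ded ∅ (negTm botTm) :=
  Ded.ded (Ded.triv (by simp) hasTy_botTm)

lemma ded_exfalso {v w : Tm} (hv : Ded ∅ (negTm v)) (hvt : HasTy v .base)
    (hwt : HasTy w .base) : Ded ∅ (impTm v w) := by
  have h1 : Ded (insert v ∅) (negTm v) := Ded.weak hvt hv
  have h2 : Ded (insert v ∅) v := Ded.triv (by simp) hvt
  have h3 : Ded (insert v ∅) botTm := Ded.mp h1 h2
  have h4 : Ded (insert (negTm w) (insert v ∅)) botTm := Ded.weak (hasTy_negTm hwt) h3
  have h5 : Ded (insert v ∅) (negTm (negTm w)) := Ded.ded h4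
  exact Ded.ded (Ded.dn h5)

lemma ded_k {v w : Tm} (hw : Ded ∅ w) (hvt : HasTy v .base) : Ded ∅ (impTm v w) :=
  Ded.ded (Ded.weak hvt hw)

lemma ded_negimp {v w : Tm} (hv : Ded ∅ v) (hw : Ded ∅ (negTm w))
    (hvt : HasTy v .base) (hwt : HasTy w .base) : Ded ∅ (negTm (impTm v w)) := by
  have h1 : Ded (insert (impTm v w) ∅) (impTm v w) :=
    Ded.triv (by simp) (hasTy_impTm hvt hwt)
  have h2 : Ded (insert (impTm v w) ∅) v := Ded.weak (hasTy_impTm hvt hwt) hv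
  have h3 : Ded (insert (impTm v w) ∅) w := Ded.mp h1 h2
  have h4 : Ded (insert (impTm v w) ∅) (negTm w) := Ded.weak (hasTy_impTm hvt hwt) hw
  exact Ded.ded (Ded.mp h4 h3)

/-! ### The logical relation -/

/-- Provable truth of a closed formula at a Boolean value. -/
def GB (u : Tm) : Bool → Prop
  | true => Ded ∅ u
  | false => Ded ∅ (negTm u)

/-- The logical relation between closed terms and semantic values. -/
def Good : (σ : Ty) → Tm → σ.sem → Prop
  | .base, u, a => HasTy u .base ∧ Closed u ∧ GB u a
  | .arrow σ τ, u, f => HasTy u (.arrow σ τ) ∧ Closed u ∧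
      ∀ v a, Good σ v a → Good τ (.app u v) (f a)

lemma good_hasTy : ∀ {σ : Ty} {u : Tm} {a : σ.sem}, Good σ u a → HasTy u σ := by
  intro σ
  cases σ <;> exact fun h => h.1

lemma good_closed : ∀ {σ : Ty} {u : Tm} {a : σ.sem}, Good σ u a → Closed u := by
  intro σ
  cases σ <;> exact fun h => h.2.1

lemma closed_app {u v : Tm} (hu : Closed u) (hv : Closed v) : Closed (.app u v) := by
  simp [Closed] at *
  simp [hu, hv]

lemma good_lamEq : ∀ (σ : Ty) {u u' : Tm} {a : σ.sem}, Good σ u a →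
    LamEq u u' → HasTy u' σ → Closed u' → Good σ u' a := by
  intro σ
  induction σ with
  | base =>
    intro u u' a hg hl ht' hc'
    obtain ⟨ht, hc, hgb⟩ := hg
    refine ⟨ht', hc', ?_⟩
    cases a with
    | true => exact Ded.lam hgb hl ht'
    | false =>
      have hneg : LamEq (negTm u) (negTm u') :=
        LamEq.ctx (σ := Ty.base) (.appL (.appR (.name .imp) .hole) botTm) hl
          (hasTy_negTm ht)
      exact Ded.lam hgb hneg (hasTy_negTm ht')
  | arrow σ τ ihσ ihτ =>
    intro u u' f hg hl ht' hc'
    obtain ⟨ht, hc, hfun⟩ := hg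
    refine ⟨ht', hc', ?_⟩
    intro v a hv
    have happ : LamEq (.app u v) (.app u' v) :=
      LamEq.ctx (σ := τ) (.appL .hole v) hl (HasTy.app ht (good_hasTy hv))
    exact ihτ (hfun v a hv) happ (HasTy.app ht' (good_hasTy hv))
      (closed_app hc' (good_closed hv))

/-! ### Evaluation lemmas -/

lemma interp_update_same (J : Interp) (n : ℕ) (σ : Ty) (a : σ.sem) :
    J.update n σ a n σ = a := by
  show (if h : n = n ∧ σ = σ then Ty.semCast h.2.symm a else J n σ) = a
  rw [dif_pos ⟨rfl, rfl⟩, semCast_refl]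

lemma interp_update_ne (J : Interp) {n k : ℕ} {σ τ : Ty} (a : σ.sem)
    (h : (k, τ) ≠ (n, σ)) : J.update n σ a k τ = J k τ := by
  show (if h : k = n ∧ τ = σ then Ty.semCast h.2.symm a else J k τ) = J k τ
  rw [dif_neg]
  intro ⟨h1, h2⟩
  exact h (by rw [h1, h2])

lemma eval_var (J : Interp) (n : ℕ) (σ : Ty) : eval J (.name (.var n σ)) σ = J n σ := by
  show (if h : σ = σ then Ty.semCast h (J n σ) else default) = J n σ
  rw [dif_pos rfl, semCast_refl]

lemma eval_app (J : Interp) {t : Tm} {τ : Ty} (h : typeOf t = some τ) (s : Tm) (σ : Ty) :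
    eval J (.app s t) σ = eval J s (.arrow τ σ) (eval J t τ) := by
  show (match typeOf t with
    | some τ' => eval J s (.arrow τ' σ) (eval J t τ')
    | none => default) = _
  rw [h]

lemma eval_lam (J : Interp) (n : ℕ) (σ₁ : Ty) (b : Tm) (σ₂ : Ty) :
    eval J (.lam n σ₁ b) (.arrow σ₁ σ₂) = fun a => eval (J.update n σ₁ a) b σ₂ := by
  show (if h : σ₁ = σ₁ then fun a => eval (J.update n σ₁ (Ty.semCast h a)) b σ₂
    else default) = _
  rw [dif_pos rfl]
  funext a
  rw [semCast_refl]

lemma closed_dfv {t : Tm} (h : Closed t) : Dfv (db [] t) = ∅ := by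
  rw [Finset.eq_empty_iff_forall_notMem]
  intro q hq
  have := (db_fv t [] q hq).1
  rw [h] at this
  simp at this

/-- The identity substitution. -/
def idSub : ℕ × Ty → Tm := fun p => vr p.1 p.2

lemma db_subst_closed (s : Tm) (ρ : ℕ × Ty → Tm) :
    db [] (substAux ρ s) = dsub (fun p => db [] (ρ p)) (db [] s) :=
  db_substAux s ρ [] []
    (by intro p _ i hi; simp [idx] at hi)
    (by intro p _ _ q _; rfl)

lemma db_vr (n : ℕ) (σ : Ty) : db [] (vr n σ) = D.fvar (n, σ) := rfl

/-- Main lemma: a closing substitution of `Good` terms yields a `Good` term. -/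
lemma main_lemma : ∀ {s : Tm} {σ : Ty}, HasTy s σ → ∀ (θ : ℕ × Ty → Tm) (J : Interp),
    (∀ p ∈ fv s, Good p.2 (θ p) (J p.1 p.2)) →
    Good σ (substAux θ s) (eval J s σ) := by
  intro s σ h
  induction h with
  | name x =>
    intro θ J hθ
    cases x with
    | var n σ =>
      have hg := hθ (n, σ) (by simp)
      show Good σ (θ (n, σ)) (eval J (.name (.var n σ)) σ)
      rw [eval_var]
      exact hg
    | bot =>
      show Good .base (.name .bot) (eval J (.name .bot) .base)
      exact ⟨HasTy.name .bot, by simp [Closed], ded_neg_bot⟩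
    | imp =>
      show Good (.arrow .base (.arrow .base .base)) (.name .imp)
        (eval J (.name .imp) (.arrow .base (.arrow .base .base)))
      refine ⟨HasTy.name .imp, by simp [Closed], ?_⟩
      intro v a hv
      obtain ⟨hvt, hvc, hvg⟩ := hv
      refine ⟨HasTy.app (HasTy.name .imp) hvt, closed_app (by simp [Closed]) hvc, ?_⟩
      intro w c hw
      obtain ⟨hwt, hwc, hwg⟩ := hw
      refine ⟨HasTy.app (HasTy.app (HasTy.name .imp) hvt) hwt,
        closed_app (closed_app (by simp [Closed]) hvc) hwc, ?_⟩
      show GB (impTm v w) (!a || c)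
      cases a with
      | false => exact ded_exfalso hvg hvt hwt
      | true =>
        cases c with
        | true => exact ded_k hwg hvt
        | false => exact ded_negimp hvg hwg hvt hwt
  | @app u v α τ hu hv ihu ihv =>
    intro θ J hθ
    have g1 := ihu θ J (fun p hp => hθ p (by simp [hp]))
    have g2 := ihv θ J (fun p hp => hθ p (by simp [hp]))
    show Good τ (.app (substAux θ u) (substAux θ v)) (eval J (.app u v) τ)
    rw [eval_app J (typeOf_complete hv)]
    exact g1.2.2 _ _ g2
  | @lam n σ b τ hb ih =>
    intro θ J hθ
    rw [substAux_lam, eval_lam]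
    set m := frsh θ n σ b with hm
    set θ' := Function.update θ (n, σ) (vr m σ) with hθ'
    have himgty : ∀ p ∈ fv b, HasTy (θ' p) p.2 := by
      intro p hp
      by_cases hpn : p = (n, σ)
      · subst hpn; rw [hθ', Function.update_self]; exact HasTy.name _
      · rw [hθ', Function.update_of_ne hpn]
        exact good_hasTy (hθ p (Finset.mem_erase.2 ⟨hpn, hp⟩))
    have hbodyTy : HasTy (substAux θ' b) τ := hasTy_substAux hb himgty
    have hlamTy : HasTy (.lam m σ (substAux θ' b)) (.arrow σ τ) := HasTy.lam hbodyTy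
    have hbodyfv : fv (substAux θ' b) ⊆ {(m, σ)} := by
      intro q hq
      rcases Finset.mem_biUnion.1 (fv_substAux b θ' hq) with ⟨p, hp, hq'⟩
      by_cases hpn : p = (n, σ)
      · subst hpn; rw [hθ', Function.update_self] at hq'; simpa using hq'
      · rw [hθ', Function.update_of_ne hpn] at hq'
        rw [good_closed (hθ p (Finset.mem_erase.2 ⟨hpn, hp⟩))] at hq'
        simp at hq'
    have hlamCl : Closed (.lam m σ (substAux θ' b)) := by
      rw [Closed, fv_lam, Finset.eq_empty_iff_forall_notMem]
      intro q hq
      have h1 := Finset.ne_of_mem_erase hq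
      have h2 := hbodyfv (Finset.mem_of_mem_erase hq)
      simp at h2
      exact h1 h2
    refine ⟨hlamTy, hlamCl, ?_⟩
    intro v a hv
    have hIH := ih (Function.update θ (n, σ) v) (J.update n σ a) ?cond
    case cond =>
      intro p hp
      by_cases hpn : p = (n, σ)
      · subst hpn
        rw [Function.update_self, interp_update_same]
        exact hv
      · rw [Function.update_of_ne hpn, interp_update_ne J a hpn]
        exact hθ p (Finset.mem_erase.2 ⟨hpn, hp⟩)
    -- the β-redex is lambda-equivalent to the composed substitution
    set Z := subst (substAux θ' b) m σ v with hZ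
    set Y := substAux (Function.update θ (n, σ) v) b with hY
    have hXty : HasTy (.app (.lam m σ (substAux θ' b)) v) τ :=
      HasTy.app hlamTy (good_hasTy hv)
    have step1 : LamEq (.app (.lam m σ (substAux θ' b)) v) Z := LamEq.beta hXty
    have hZty : HasTy Z τ := by
      apply hasTy_substAux hbodyTy
      intro p hp
      by_cases hpm : p = (m, σ)
      · subst hpm; rw [Function.update_self]; exact good_hasTy hv
      · rw [Function.update_of_ne hpm]; exact HasTy.name _
    have hYty : HasTy Y τ := by
      apply hasTy_substAux hb
      intro p hp
      by_cases hpn : p = (n, σ)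
      · subst hpn; rw [Function.update_self]; exact good_hasTy hv
      · rw [Function.update_of_ne hpn]
        exact good_hasTy (hθ p (Finset.mem_erase.2 ⟨hpn, hp⟩))
    have hdbZY : db [] Z = db [] Y := by
      rw [hZ, hY, subst, db_subst_closed, db_subst_closed (s := b), db_subst_closed,
        dsub_dsub]
      apply dsub_congr
      intro p hp
      have hpfv := (db_fv b [] p hp).1
      by_cases hpn : p = (n, σ)
      · subst hpn
        rw [hθ', Function.update_self, Function.update_self, db_vr]
        show db [] (Function.update (fun p => vr p.1 p.2) (m, σ) v (m, σ)) = _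
        rw [Function.update_self]
      · rw [hθ', Function.update_of_ne hpn, Function.update_of_ne hpn]
        have hcl : Closed (θ p) := good_closed (hθ p (Finset.mem_erase.2 ⟨hpn, hpfv⟩))
        exact dsub_nofv (closed_dfv hcl)
    have step2 : LamEq Z Y := lamEq_of_db (tmSize Z) Z Y τ le_rfl hZty hYty hdbZY
    have hYcl : Closed Y := by
      rw [Closed, Finset.eq_empty_iff_forall_notMem]
      intro q hq
      rcases Finset.mem_biUnion.1 (fv_substAux b _ hq) with ⟨p, hp, hq'⟩
      by_cases hpn : p = (n, σ)
      · subst hpn; rw [Function.update_self] at hq'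
        rw [good_closed hv] at hq'; simp at hq'
      · rw [Function.update_of_ne hpn] at hq'
        rw [good_closed (hθ p (Finset.mem_erase.2 ⟨hpn, hp⟩))] at hq'
        simp at hq'
    have hXcl : Closed (.app (.lam m σ (substAux θ' b)) v) :=
      closed_app hlamCl (good_closed hv)
    have := good_lamEq τ hIH (LamEq.symm (LamEq.trans step1 step2)) hXty hXcl
    exact this

end AuxCC
/-- Closed Completeness: every closed valid formula is deducible. -/
theorem closed_completeness (s : Tm) (hty : HasTy s .base) (hclosed : Closed s)
    (hvalid : ValidFml s) : Ded ∅ s := by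
  classical
  let J : Interp := fun _ σ => (default : σ.sem)
  have hcond : ∀ p ∈ fv s, Good p.2 (idSub p) (J p.1 p.2) := by
    intro p hp
    rw [hclosed] at hp
    simp at hp
  have hgood := main_lemma hty idSub J hcond
  have hval : eval J s .base = true := hvalid J
  rw [hval] at hgood
  have hXty : HasTy (substAux idSub s) .base := by
    apply hasTy_substAux hty
    intro p _
    exact HasTy.name _
  have hdb : db [] (substAux idSub s) = db [] s := by
    rw [db_subst_closed]
    have e : (fun p => db [] (idSub p)) = fun p : ℕ × Ty => D.fvar p := by
      funext p
      show db [] (vr p.1 p.2) = _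
      rw [db_vr]
    rw [e, dsub_id]
  have hle : LamEq (substAux idSub s) s :=
    lamEq_of_db _ _ _ .base le_rfl hXty hty hdb
  exact Ded.lam hgood.2.2 hle hty

end PTT
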